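/- Let f, g : ℝ² → ℝ be C² functions, L > 0, and let (U, V) be a non-constant regular stationary solution on [0, L]: V is continuously differentiable on [0, L] and twice differentiable on (0, L), V''(x) + g(U(x), V(x)) = 0 on (0, L), V'(0) = V'(L) = 0, U = k ∘ V for a continuously differentiable function k : ℝ → ℝ satisfying f(k(v), v) = 0 for all v in an open interval containing the range of V. Assume that every constant stationary solution touched by (U, V) is non-degenerate. Then there exists x₀ ∈ [0, L] such that (ū, v̄) := (U(x₀), V(x₀)) is a constant stationary solution (f(ū, v̄) = 0, g(ū, v̄) = 0) and (1 / ∂_u f(ū, v̄)) · (∂_u f(ū, v̄) ∂_v g(ū, v̄) − ∂_v f(ū, v̄) ∂_u g(ū, v̄)) > 0. -/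

import Mathlib

open Set
open Filter Metric Topology

/-- Partial derivative with respect to the first variable. -/
noncomputable def pd1 (f : ℝ → ℝ → ℝ) (u v : ℝ) : ℝ := deriv (fun u' => f u' v) u

/-- Partial derivative with respect to the second variable. -/
noncomputable def pd2 (f : ℝ → ℝ → ℝ) (u v : ℝ) : ℝ := deriv (fun v' => f u v') v

lemma pd1_hasDeriv (f : ℝ → ℝ → ℝ) (hf : Differentiable ℝ (Function.uncurry f)) (u v : ℝ) :
    HasDerivAt (fun u' => f u' v) (fderiv ℝ (Function.uncurry f) (u, v) (1, 0)) u := by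
  have h1 : HasDerivAt (fun u' : ℝ => (u', v)) ((1 : ℝ), (0 : ℝ)) u :=
    HasDerivAt.prodMk (hasDerivAt_id u) (hasDerivAt_const u v)
  exact (hf (u, v)).hasFDerivAt.comp_hasDerivAt u h1

lemma pd2_hasDeriv (f : ℝ → ℝ → ℝ) (hf : Differentiable ℝ (Function.uncurry f)) (u v : ℝ) :
    HasDerivAt (fun v' => f u v') (fderiv ℝ (Function.uncurry f) (u, v) (0, 1)) v := by
  have h1 : HasDerivAt (fun v' : ℝ => (u, v')) ((0 : ℝ), (1 : ℝ)) v :=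
    HasDerivAt.prodMk (hasDerivAt_const v u) (hasDerivAt_id v)
  exact (hf (u, v)).hasFDerivAt.comp_hasDerivAt v h1

lemma hasDerivAt_comp_k (f : ℝ → ℝ → ℝ) (hf : Differentiable ℝ (Function.uncurry f))
    (k : ℝ → ℝ) (k' : ℝ) (v : ℝ) (hk : HasDerivAt k k' v) :
    HasDerivAt (fun t => f (k t) t) (pd1 f (k v) v * k' + pd2 f (k v) v) v := by
  have h1 : HasDerivAt (fun t : ℝ => (k t, t)) ((k', (1 : ℝ))) v := HasDerivAt.prodMk hk (hasDerivAt_id v)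
  have h2 : HasDerivAt (fun t => Function.uncurry f (k t, t))
      ((fderiv ℝ (Function.uncurry f) (k v, v)) (k', 1)) v :=
    HasFDerivAt.comp_hasDerivAt_of_eq v (hf (k v, v)).hasFDerivAt h1 rfl
  have e1 : pd1 f (k v) v = fderiv ℝ (Function.uncurry f) (k v, v) (1, 0) :=
    (pd1_hasDeriv f hf (k v) v).deriv
  have e2 : pd2 f (k v) v = fderiv ℝ (Function.uncurry f) (k v, v) (0, 1) :=
    (pd2_hasDeriv f hf (k v) v).deriv
  have e : (fderiv ℝ (Function.uncurry f) (k v, v)) (k', 1)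
      = pd1 f (k v) v * k' + pd2 f (k v) v := by
    have hsum : ((k' : ℝ), (1 : ℝ)) = k' • ((1 : ℝ), (0 : ℝ)) + (1 : ℝ) • ((0 : ℝ), (1 : ℝ)) := by
      simp
    rw [hsum, map_add, map_smul, map_smul, e1, e2]
    simp [smul_eq_mul]
    ring
  rw [← e]
  exact h2

lemma lemA (L : ℝ) (hL : 0 < L) (W W' G : ℝ → ℝ)
    (hW : ∀ x ∈ Icc 0 L, HasDerivWithinAt W (W' x) (Icc 0 L) x)
    (hW'c : ContinuousOn W' (Icc 0 L))
    (hW'' : ∀ x ∈ Ioo 0 L, HasDerivAt W' (G x) x)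
    (hGc : ContinuousOn G (Icc 0 L))
    (h0 : W' 0 = 0) (hLn : W' L = 0)
    (x₁ : ℝ) (hx₁ : x₁ ∈ Icc 0 L) (hmax : ∀ x ∈ Icc 0 L, W x ≤ W x₁)
    (hGpos : 0 < G x₁) : False := by
  have hWc : ContinuousOn W (Icc 0 L) := fun x hx => (hW x hx).continuousWithinAt
  have hev : ∀ᶠ x in 𝓝[Icc 0 L] x₁, 0 < G x :=
    (hGc x₁ hx₁).eventually (eventually_gt_nhds hGpos)
  rcases Metric.mem_nhdsWithin_iff.1 hev with ⟨ε, hε, hball⟩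
  rcases eq_or_lt_of_le hx₁.2 with hx₁L | hx₁L
  · -- x₁ = L : use the left side
    have hLε : max 0 (L - ε) < L := max_lt hL (by linarith)
    set c := max 0 (L - ε) with hc
    have hsub : Icc c L ⊆ Icc 0 L := Icc_subset_Icc (le_max_left _ _) le_rfl
    have hintpos : ∀ x ∈ Ioo c L, 0 < G x := by
      intro x hx
      have hxI : x ∈ Icc 0 L := ⟨le_trans (le_max_left _ _) hx.1.le, hx.2.le⟩
      have : x ∈ Metric.ball x₁ ε := by
        rw [Metric.mem_ball, Real.dist_eq, hx₁L, abs_lt]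
        constructor
        · have : L - ε ≤ c := le_max_right _ _
          linarith [hx.1]
        · linarith [hx.2]
      exact hball ⟨this, hxI⟩
    have hmono' : StrictMonoOn W' (Icc c L) := by
      apply strictMonoOn_of_deriv_pos (convex_Icc c L) (hW'c.mono hsub)
      intro x hx
      rw [interior_Icc] at hx
      have hxO : x ∈ Ioo 0 L := ⟨lt_of_le_of_lt (le_max_left _ _) hx.1, hx.2⟩
      rw [(hW'' x hxO).deriv]
      exact hintpos x hx
    have hW'neg : ∀ x ∈ Ico c L, W' x < 0 := by
      intro x hx
      have := hmono' ⟨hx.1, hx.2.le⟩ ⟨hLε.le, le_rfl⟩ hx.2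
      rwa [hLn] at this
    have hanti : StrictAntiOn W (Icc c L) := by
      apply strictAntiOn_of_deriv_neg (convex_Icc c L) (hWc.mono hsub)
      intro x hx
      rw [interior_Icc] at hx
      have hxO : x ∈ Ioo 0 L := ⟨lt_of_le_of_lt (le_max_left _ _) hx.1, hx.2⟩
      have hxI : x ∈ Icc 0 L := ⟨hxO.1.le, hxO.2.le⟩
      rw [((hW x hxI).hasDerivAt (Icc_mem_nhds hxO.1 hxO.2)).deriv]
      exact hW'neg x ⟨hx.1.le, hx.2⟩
    have h1 : W L < W c := hanti ⟨le_rfl, hLε.le⟩ ⟨hLε.le, le_rfl⟩ hLε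
    have h2 : W c ≤ W x₁ := hmax c (hsub ⟨le_rfl, hLε.le⟩)
    rw [hx₁L] at h2
    linarith
  · -- x₁ < L : use the right side
    have hdd : x₁ < min L (x₁ + ε) := lt_min hx₁L (by linarith)
    set d := min L (x₁ + ε) with hd
    have hsub : Icc x₁ d ⊆ Icc 0 L := Icc_subset_Icc hx₁.1 (min_le_left _ _)
    have hintpos : ∀ x ∈ Ioo x₁ d, 0 < G x := by
      intro x hx
      have hxI : x ∈ Icc 0 L := ⟨le_trans hx₁.1 hx.1.le, le_trans hx.2.le (min_le_left _ _)⟩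
      have : x ∈ Metric.ball x₁ ε := by
        rw [Metric.mem_ball, Real.dist_eq, abs_lt]
        have : d ≤ x₁ + ε := min_le_right _ _
        constructor <;> [linarith [hx.1]; linarith [hx.2]]
      exact hball ⟨this, hxI⟩
    have hxO' : ∀ x ∈ Ioo x₁ d, x ∈ Ioo 0 L := fun x hx =>
      ⟨lt_of_le_of_lt hx₁.1 hx.1, lt_of_lt_of_le hx.2 (min_le_left _ _)⟩
    have hmono' : StrictMonoOn W' (Icc x₁ d) := by
      apply strictMonoOn_of_deriv_pos (convex_Icc x₁ d) (hW'c.mono hsub)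
      intro x hx
      rw [interior_Icc] at hx
      rw [(hW'' x (hxO' x hx)).deriv]
      exact hintpos x hx
    have hW'x₁ : W' x₁ = 0 := by
      rcases eq_or_lt_of_le hx₁.1 with h | h
      · rw [← h]; exact h0
      · have hN : Icc 0 L ∈ 𝓝 x₁ := Icc_mem_nhds h hx₁L
        have hW1 : HasDerivAt W (W' x₁) x₁ := (hW x₁ hx₁).hasDerivAt hN
        have hmo : IsMaxOn W (Icc 0 L) x₁ := fun x hx => hmax x hx
        have hlm : IsLocalMax W x₁ := hmo.isLocalMax hN
        exact hlm.hasDerivAt_eq_zero hW1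
    have hW'pos : ∀ x ∈ Ioo x₁ d, 0 < W' x := by
      intro x hx
      have := hmono' ⟨le_rfl, hdd.le⟩ ⟨hx.1.le, hx.2.le⟩ hx.1
      rwa [hW'x₁] at this
    have hmono : StrictMonoOn W (Icc x₁ d) := by
      apply strictMonoOn_of_deriv_pos (convex_Icc x₁ d) (hWc.mono hsub)
      intro x hx
      rw [interior_Icc] at hx
      have hxO : x ∈ Ioo 0 L := hxO' x hx
      have hxI : x ∈ Icc 0 L := ⟨hxO.1.le, hxO.2.le⟩
      rw [((hW x hxI).hasDerivAt (Icc_mem_nhds hxO.1 hxO.2)).deriv]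
      exact hW'pos x hx
    have h1 : W x₁ < W d := hmono ⟨le_rfl, hdd.le⟩ ⟨hdd.le, le_rfl⟩ hdd
    have h2 : W d ≤ W x₁ := hmax d (hsub ⟨hdd.le, le_rfl⟩)
    linarith

lemma lemB' (h : ℝ → ℝ) (hc : Continuous h) (a b : ℝ) (hab : a < b)
    (ha : h a ≤ 0) (D : ℝ → ℝ)
    (hD : ∀ v ∈ Icc a b, h v = 0 → HasDerivAt h (D v) v ∧ D v ≠ 0)
    (c : ℝ) (hcb : c < b) (hpos : ∀ t ∈ Ioo c b, 0 < h t) :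
    ∃ v ∈ Icc a b, h v = 0 ∧ 0 < D v := by
  set S : Set ℝ := {v ∈ Icc a b | ∀ t ∈ Ioo v b, 0 < h t} with hS
  have hbS : b ∈ S := ⟨⟨hab.le, le_rfl⟩, fun t ht => absurd ht.2 (not_lt.2 ht.1.le)⟩
  have hne : S.Nonempty := ⟨b, hbS⟩
  have hbdd : BddBelow S := ⟨a, fun v hv => hv.1.1⟩
  set a' := sInf S with ha'
  have hmS : max a c ∈ S :=
    ⟨⟨le_max_left _ _, (max_lt hab hcb).le⟩,
      fun t ht => hpos t ⟨lt_of_le_of_lt (le_max_right a c) ht.1, ht.2⟩⟩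
  have ha'b : a' < b := lt_of_le_of_lt (csInf_le hbdd hmS) (max_lt hab hcb)
  have ha'a : a ≤ a' := le_csInf hne fun v hv => hv.1.1
  have hIoo : ∀ t ∈ Ioo a' b, 0 < h t := by
    intro t ht
    obtain ⟨s, hsS, hst⟩ := exists_lt_of_csInf_lt hne ht.1
    exact hsS.2 t ⟨hst, ht.2⟩
  have ha'0 : h a' = 0 := by
    have h1 : 0 ≤ h a' := by
      have ht : Tendsto h (𝓝[>] a') (𝓝 (h a')) :=
        (hc.continuousAt.tendsto).mono_left nhdsWithin_le_nhds
      refine ge_of_tendsto ht ?_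
      filter_upwards [Ioo_mem_nhdsGT_of_mem (⟨le_rfl, ha'b⟩ : a' ∈ Ico a' b)] with t hts
      exact (hIoo t hts).le
    have h2 : h a' ≤ 0 := by
      rcases eq_or_lt_of_le ha'a with he | he
      · rw [← he]; exact ha
      · by_contra hcon
        push_neg at hcon
        have hev : ∀ᶠ x in 𝓝 a', 0 < h x := hc.continuousAt.eventually (eventually_gt_nhds hcon)
        rcases Metric.eventually_nhds_iff.1 hev with ⟨η, hη, hballpos⟩
        have htlt : max a (a' - η / 2) < a' := max_lt he (by linarith)
        have htS : max a (a' - η / 2) ∈ S := by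
          refine ⟨⟨le_max_left _ _, le_trans htlt.le ha'b.le⟩, fun s hs => ?_⟩
          rcases lt_or_ge a' s with h' | h'
          · exact hIoo s ⟨h', hs.2⟩
          · apply hballpos
            rw [Real.dist_eq, abs_lt]
            have : a' - η / 2 ≤ max a (a' - η / 2) := le_max_right _ _
            constructor
            · linarith [hs.1]
            · linarith
        exact absurd (csInf_le hbdd htS) (not_le.2 htlt)
    linarith
  obtain ⟨hder, hne0⟩ := hD a' ⟨ha'a, ha'b.le⟩ ha'0
  have hDpos : 0 < D a' := by
    have hsl : Tendsto (slope h a') (𝓝[>] a') (𝓝 (D a')) :=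
      (hasDerivAt_iff_tendsto_slope.1 hder).mono_left
        (nhdsWithin_mono a' fun x (hx : a' < x) => Set.mem_compl_singleton_iff.mpr hx.ne')
    have hDge : 0 ≤ D a' := by
      refine ge_of_tendsto hsl ?_
      filter_upwards [Ioo_mem_nhdsGT_of_mem (⟨le_rfl, ha'b⟩ : a' ∈ Ico a' b)] with t hts
      rw [slope_def_field]
      have h1 : 0 < h t := hIoo t hts
      have h2 : 0 < t - a' := sub_pos.2 hts.1
      rw [ha'0]
      exact (div_pos (by linarith) h2).le
    exact lt_of_le_of_ne hDge (Ne.symm hne0)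
  exact ⟨a', ⟨ha'a, ha'b.le⟩, ha'0, hDpos⟩

lemma lemB (h : ℝ → ℝ) (hc : Continuous h) (a b : ℝ) (hab : a < b)
    (ha : h a ≤ 0) (hb : 0 ≤ h b) (D : ℝ → ℝ)
    (hD : ∀ v ∈ Icc a b, h v = 0 → HasDerivAt h (D v) v ∧ D v ≠ 0) :
    ∃ v ∈ Icc a b, h v = 0 ∧ 0 < D v := by
  rcases eq_or_lt_of_le hb with hb0 | hbpos
  · obtain ⟨hder, hne0⟩ := hD b ⟨hab.le, le_rfl⟩ hb0.symm
    rcases hne0.lt_or_gt with hneg | hpos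
    · -- D b < 0 : h is positive just to the left of b
      have hsl : Tendsto (slope h b) (𝓝[<] b) (𝓝 (D b)) :=
        (hasDerivAt_iff_tendsto_slope.1 hder).mono_left
          (nhdsWithin_mono b fun x hx => ne_of_lt hx)
      have hev : ∀ᶠ t in 𝓝[<] b, slope h b t < 0 := hsl.eventually (eventually_lt_nhds hneg)
      rcases mem_nhdsLT_iff_exists_Ioo_subset.1 hev with ⟨l, hl, hsub⟩
      refine lemB' h hc a b hab ha D hD l hl ?_
      intro t ht
      have := hsub ht
      rw [Set.mem_setOf_eq, slope_def_field, hb0.symm] at this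
      have h2 : t - b < 0 := sub_neg.2 ht.2
      rcases div_neg_iff.1 this with ⟨_, h4⟩ | ⟨h3, _⟩
      · linarith
      · linarith
    · exact ⟨b, ⟨hab.le, le_rfl⟩, hb0.symm, hpos⟩
  · -- 0 < h b
    have hev : ∀ᶠ x in 𝓝 b, 0 < h x := hc.continuousAt.eventually (eventually_gt_nhds hbpos)
    rcases Metric.eventually_nhds_iff.1 hev with ⟨η, hη, hballpos⟩
    refine lemB' h hc a b hab ha D hD (b - η) (by linarith) ?_
    intro t ht
    apply hballpos
    rw [Real.dist_eq, abs_lt]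
    constructor <;> linarith [ht.1, ht.2]

/-- Theorem 2.8 (1D case): a non-constant regular stationary solution touches a
non-degenerate constant stationary solution (ū, v̄) at which
(1 / f_u) · (f_u g_v − f_v g_u) > 0. -/
theorem stmt_2
    (f g : ℝ → ℝ → ℝ)
    (hf : ContDiff ℝ 2 (Function.uncurry f))
    (hg : ContDiff ℝ 2 (Function.uncurry g))
    (L : ℝ) (hL : 0 < L)
    (U V V' V'' : ℝ → ℝ) (k : ℝ → ℝ) (α β : ℝ)
    -- (U, V) is a stationary solution in (0, L) with Neumann boundary conditions
    (hV' : ∀ x ∈ Icc 0 L, HasDerivWithinAt V (V' x) (Icc 0 L) x)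
    (hV'c : ContinuousOn V' (Icc 0 L))
    (hV'' : ∀ x ∈ Ioo 0 L, HasDerivAt V' (V'' x) x)
    (heq : ∀ x ∈ Ioo 0 L, V'' x + g (U x) (V x) = 0)
    (hN0 : V' 0 = 0) (hNL : V' L = 0)
    -- regularity of the solution: U = k ∘ V with f(k(v), v) = 0 on an open interval
    -- containing the range of V
    (hk : ContDiff ℝ 1 k)
    (hUk : ∀ x ∈ Icc 0 L, U x = k (V x))
    (hrange : ∀ x ∈ Icc 0 L, V x ∈ Ioo α β)
    (hfk : ∀ v ∈ Ioo α β, f (k v) v = 0)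
    -- the solution is non-constant
    (hnc : ¬ ∃ c : ℝ × ℝ, ∀ x ∈ Icc 0 L, (U x, V x) = c)
    -- every constant solution touched by (U, V) is non-degenerate
    (hnondeg : ∀ x ∈ Icc 0 L, f (U x) (V x) = 0 → g (U x) (V x) = 0 →
      pd1 f (U x) (V x) + pd2 g (U x) (V x) ≠ 0 ∧
      pd1 f (U x) (V x) * pd2 g (U x) (V x)
        - pd2 f (U x) (V x) * pd1 g (U x) (V x) ≠ 0 ∧
      pd1 f (U x) (V x) ≠ 0) :
    ∃ x₀ ∈ Icc 0 L,
      f (U x₀) (V x₀) = 0 ∧ g (U x₀) (V x₀) = 0 ∧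
      (1 / pd1 f (U x₀) (V x₀)) *
        (pd1 f (U x₀) (V x₀) * pd2 g (U x₀) (V x₀)
          - pd2 f (U x₀) (V x₀) * pd1 g (U x₀) (V x₀)) > 0 := by
  have hVc : ContinuousOn V (Icc 0 L) := fun x hx => (hV' x hx).continuousWithinAt
  have hUc : ContinuousOn U (Icc 0 L) :=
    (hk.continuous.comp_continuousOn hVc).congr fun x hx => hUk x hx
  have hgUVc : ContinuousOn (fun x => g (U x) (V x)) (Icc 0 L) :=
    hg.continuous.comp_continuousOn (hUc.prodMk hVc)
  set h : ℝ → ℝ := fun v => g (k v) v with hh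
  have hhc : Continuous h := hg.continuous.comp (hk.continuous.prodMk continuous_id)
  have hgU : ∀ x ∈ Icc 0 L, g (U x) (V x) = h (V x) := fun x hx => by
    simp only [hh]; rw [hUk x hx]
  -- extreme points
  have h0mem : (0:ℝ) ∈ Icc 0 L := ⟨le_rfl, hL.le⟩
  obtain ⟨xmax, hxmax, hmax'⟩ := isCompact_Icc.exists_isMaxOn ⟨0, h0mem⟩ hVc
  obtain ⟨xmin, hxmin, hmin'⟩ := isCompact_Icc.exists_isMinOn ⟨0, h0mem⟩ hVc
  have hmax : ∀ y ∈ Icc 0 L, V y ≤ V xmax := fun y hy => hmax' hy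
  have hmin : ∀ y ∈ Icc 0 L, V xmin ≤ V y := fun y hy => hmin' hy
  set a := V xmin with hadef
  set b := V xmax with hbdef
  -- a < b : the solution is non-constant
  push_neg at hnc
  obtain ⟨x, hx, hxne⟩ := hnc (U 0, V 0)
  have hVne : V x ≠ V 0 := by
    intro hVeq
    apply hxne
    rw [Prod.ext_iff]
    exact ⟨by rw [hUk x hx, hUk 0 h0mem, hVeq], hVeq⟩
  have hab : a < b := by
    rcases lt_or_ge a b with h' | h'
    · exact h'
    · exfalso
      apply hVne
      have e1 : V x = a := le_antisymm (le_trans (hmax x hx) h') (hmin x hx)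
      have e2 : V 0 = a := le_antisymm (le_trans (hmax 0 h0mem) h') (hmin 0 h0mem)
      rw [e1, e2]
  have hrsub : Icc a b ⊆ Ioo α β := fun v hv =>
    ⟨lt_of_lt_of_le (hrange xmin hxmin).1 hv.1, lt_of_le_of_lt hv.2 (hrange xmax hxmax).2⟩
  -- intermediate value theorem: every value in [a, b] is attained
  have hIVT : ∀ v ∈ Icc a b, ∃ x ∈ Icc 0 L, V x = v := by
    intro v hv
    have husub : uIcc xmin xmax ⊆ Icc 0 L := by
      rw [uIcc_eq_union]
      exact union_subset (Icc_subset_Icc hxmin.1 hxmax.2) (Icc_subset_Icc hxmax.1 hxmin.2)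
    have := intermediate_value_uIcc (hVc.mono husub)
    have hv' : v ∈ uIcc (V xmin) (V xmax) := by
      rw [uIcc_of_le hab.le]; exact hv
    obtain ⟨y, hy, hVy⟩ := this hv'
    exact ⟨y, husub hy, hVy⟩
  -- h b ≥ 0
  have hb0 : 0 ≤ h b := by
    by_contra hneg
    push_neg at hneg
    apply lemA L hL V V' (fun x => -g (U x) (V x)) hV' hV'c ?_ hgUVc.neg hN0 hNL
      xmax hxmax (fun y hy => hmax y hy) ?_
    · intro y hy
      show HasDerivAt V' (-g (U y) (V y)) y
      have hEq : -g (U y) (V y) = V'' y := by linarith [heq y hy]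
      rw [hEq]
      exact hV'' y hy
    · show 0 < -g (U xmax) (V xmax)
      rw [hgU xmax hxmax]
      have : h (V xmax) < 0 := hneg
      linarith
  -- h a ≤ 0
  have ha0 : h a ≤ 0 := by
    by_contra hpos
    push_neg at hpos
    apply lemA L hL (fun y => -V y) (fun y => -V' y) (fun y => g (U y) (V y))
      (fun y hy => (hV' y hy).neg) hV'c.neg ?_ hgUVc ?_ ?_
      xmin hxmin (fun y hy => neg_le_neg (hmin y hy)) ?_
    · intro y hy
      show HasDerivAt (fun y => -V' y) (g (U y) (V y)) y
      have hEq : g (U y) (V y) = -V'' y := by linarith [heq y hy]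
      rw [hEq]
      exact (hV'' y hy).neg
    · simp [hN0]
    · simp [hNL]
    · show 0 < g (U xmin) (V xmin)
      rw [hgU xmin hxmin]
      exact hpos
  -- the derivative along the branch
  have hdf : Differentiable ℝ (Function.uncurry f) := hf.differentiable two_ne_zero
  have hdg : Differentiable ℝ (Function.uncurry g) := hg.differentiable two_ne_zero
  set D : ℝ → ℝ := fun v => (1 / pd1 f (k v) v) *
    (pd1 f (k v) v * pd2 g (k v) v - pd2 f (k v) v * pd1 g (k v) v) with hD
  have hDder : ∀ v ∈ Icc a b, h v = 0 → HasDerivAt h (D v) v ∧ D v ≠ 0 := by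
    intro v hv hv0
    obtain ⟨y, hyI, hVy⟩ := hIVT v hv
    have hUy : U y = k v := by rw [hUk y hyI, hVy]
    have hvab : v ∈ Ioo α β := hrsub hv
    have hf0 : f (U y) (V y) = 0 := by rw [hUy, hVy]; exact hfk v hvab
    have hg0 : g (U y) (V y) = 0 := by rw [hUy, hVy]; exact hv0
    obtain ⟨_, hnd2, hnd3⟩ := hnondeg y hyI hf0 hg0
    rw [hUy, hVy] at hnd2 hnd3
    have hk' : HasDerivAt k (deriv k v) v := (hk.differentiable one_ne_zero v).hasDerivAt
    have hfz : HasDerivAt (fun t => f (k t) t) 0 v := by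
      have hev : (fun t => f (k t) t) =ᶠ[𝓝 v] fun _ => (0:ℝ) := by
        filter_upwards [Ioo_mem_nhds hvab.1 hvab.2] with t ht
        exact hfk t ht
      exact (hasDerivAt_const v (0:ℝ)).congr_of_eventuallyEq hev
    have hkey : pd1 f (k v) v * deriv k v + pd2 f (k v) v = 0 :=
      (hasDerivAt_comp_k f hdf k (deriv k v) v hk').unique hfz
    have hgd := hasDerivAt_comp_k g hdg k (deriv k v) v hk'
    have hDeq : pd1 g (k v) v * deriv k v + pd2 g (k v) v = D v := by
      have hkd : deriv k v = -(pd2 f (k v) v) / pd1 f (k v) v := by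
        field_simp
        linarith
      rw [hkd, hD]
      field_simp
      ring
    refine ⟨hDeq ▸ hgd, ?_⟩
    rw [hD]
    exact mul_ne_zero (one_div_ne_zero hnd3) hnd2
  obtain ⟨w, hw, hw0, hwD⟩ := lemB h hhc a b hab ha0 hb0 D hDder
  obtain ⟨x₀, hx₀, hVx₀⟩ := hIVT w hw
  have hUx₀ : U x₀ = k w := by rw [hUk x₀ hx₀, hVx₀]
  refine ⟨x₀, hx₀, ?_, ?_, ?_⟩
  · rw [hUx₀, hVx₀]; exact hfk w (hrsub hw)
  · rw [hUx₀, hVx₀]; exact hw0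
  · rw [hUx₀, hVx₀]; exact hwD
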